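/- For every integer k ≥ 0, the sequence a satisfies the closed-form expressions a(kτ+1) = ρ^{k/2}·(F₁₁(k)·a(1) + F₁₂(k)·a(0)) + ∑_{s=0}^{k−1} ρ^{(k−1−s)/2}·(F₁₁(k−1−s)·G₁₁(s) + F₁₂(k−1−s)·G₂₁(s)) and a(kτ) = ρ^{k/2}·(F₂₁(k)·a(1) + F₂₂(k)·a(0)) + ∑_{s=0}^{k−1} ρ^{(k−1−s)/2}·(F₂₁(k−1−s)·G₁₁(s) + F₂₂(k−1−s)·G₂₁(s)). -/

import Mathlib

open Finset MeasureTheory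

lemma dsum_aux (f : ℕ → ℝ) : ∀ n : ℕ, ∑ i ∈ range n, ∑ j ∈ range i, f j
    = ∑ j ∈ range n, ((n : ℝ) - 1 - (j : ℝ)) * f j := by
  intro n
  induction n with
  | zero => simp
  | succ n ih =>
    rw [Finset.sum_range_succ, ih, Finset.sum_range_succ, ← Finset.sum_add_distrib]
    push_cast
    rw [Finset.sum_congr rfl (fun j _ => by ring :
      ∀ j ∈ range n, ((n:ℝ) - 1 - j) * f j + f j = ((n:ℝ) + 1 - 1 - j) * f j)]
    ring

lemma icc_to_range (n : ℕ) (f : ℕ → ℝ) :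
    ∑ j ∈ Finset.Icc 1 (n+1), f j = ∑ i ∈ range (n+1), f (n+1-i) := by
  refine Finset.sum_nbij' (fun j => n+1-j) (fun i => n+1-i) ?_ ?_ ?_ ?_ ?_
  all_goals intro x hx
  all_goals simp only [Finset.mem_Icc, Finset.mem_range] at *
  · omega
  · omega
  · omega
  · omega
  · congr 1; omega

lemma trig_aux (θ : ℝ) (x : ℝ) :
    Real.sin ((x+1)*θ) + Real.sin ((x-1)*θ) = 2 * Real.cos θ * Real.sin (x*θ) := by
  have h1 : (x+1)*θ = x*θ + θ := by ring
  have h2 : (x-1)*θ = x*θ - θ := by ring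
  rw [h1, h2, Real.sin_add, Real.sin_sub]; ring

lemma step_combine (k : ℕ) (c1 c2 G X1 X2 Y : ℝ) (t1 t2 u : ℕ → ℝ)
    (hX : c1*X1 - c2*X2 = Y)
    (ht : ∀ s ∈ range k, c1 * t1 s - c2 * t2 s = u s)
    (hG : u k = G) :
    c1*(X1 + ∑ s ∈ range k, t1 s) - c2*(X2 + ∑ s ∈ range k, t2 s) + G
      = Y + ∑ s ∈ range (k+1), u s := by
  rw [Finset.sum_range_succ, ← hX, ← hG, ← Finset.sum_congr rfl ht,
    Finset.sum_sub_distrib, ← Finset.mul_sum, ← Finset.mul_sum]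
  ring

theorem recursion_closed_form
    (τ : ℕ) (hτ : 0 < τ) (ρ : ℝ)
    (hρlo : ((τ : ℝ) - 1) / ((τ : ℝ) + 3) < ρ) (hρhi : ρ < 1)
    (b : ℕ → ℝ) (a : ℕ → ℝ)
    (ha : ∀ t : ℕ, 1 ≤ t →
      a (t + 1) = (if τ ∣ t then ρ else 1) * (2 * a t - a (t - 1) + b t - b (t - 1)))
    (θ : ℝ) (hθ : θ ∈ Set.Ioo 0 Real.pi)
    (hcos : Real.cos θ = (ρ * (τ + 1) + 1 - τ) / (2 * Real.sqrt ρ))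
    (hsin : Real.sin θ = Real.sqrt (4 * ρ - (ρ * (τ + 1) + 1 - τ) ^ 2) / (2 * Real.sqrt ρ))
    (F11 F12 F21 F22 : ℕ → ℝ)
    (hF11 : F11 = fun (s : ℕ) => Real.sin (((s : ℝ) + 1) * θ) / Real.sin θ
      + ((τ : ℝ) - 1) * Real.sin ((s : ℝ) * θ) / (Real.sqrt ρ * Real.sin θ))
    (hF12 : F12 = fun (s : ℕ) => -((τ : ℝ) * Real.sqrt ρ * Real.sin ((s : ℝ) * θ) / Real.sin θ))
    (hF21 : F21 = fun (s : ℕ) => (τ : ℝ) * Real.sin ((s : ℝ) * θ) / (Real.sqrt ρ * Real.sin θ))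
    (hF22 : F22 = fun (s : ℕ) => -(Real.sin (((s : ℝ) - 1) * θ) / Real.sin θ)
      - ((τ : ℝ) - 1) * Real.sin ((s : ℝ) * θ) / (Real.sqrt ρ * Real.sin θ))
    (G11 G21 : ℕ → ℝ)
    (hG11 : G11 = fun s => ρ * ∑ j ∈ Finset.Icc 1 τ,
        (j : ℝ) * (b (s * τ + (τ + 1 - j)) - b (s * τ + (τ - j))))
    (hG21 : G21 = fun s => ∑ j ∈ Finset.Icc 1 τ,
        ((j : ℝ) - 1) * (b (s * τ + (τ + 1 - j)) - b (s * τ + (τ - j)))) :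
    ∀ k : ℕ,
      a (k * τ + 1) = Real.sqrt ρ ^ k * (F11 k * a 1 + F12 k * a 0)
        + ∑ s ∈ Finset.range k, Real.sqrt ρ ^ (k - 1 - s) *
            (F11 (k - 1 - s) * G11 s + F12 (k - 1 - s) * G21 s) ∧
      a (k * τ) = Real.sqrt ρ ^ k * (F21 k * a 1 + F22 k * a 0)
        + ∑ s ∈ Finset.range k, Real.sqrt ρ ^ (k - 1 - s) *
            (F21 (k - 1 - s) * G11 s + F22 (k - 1 - s) * G21 s) := by
  obtain ⟨n, rfl⟩ : ∃ n, τ = n + 1 := ⟨τ - 1, by omega⟩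
  -- basic positivity facts
  have hρ0 : 0 < ρ := by
    have h0 : (0:ℝ) ≤ ((↑(n+1):ℝ) - 1) / ((↑(n+1):ℝ) + 3) := by
      apply div_nonneg
      · push_cast; linarith [Nat.cast_nonneg (α := ℝ) n]
      · push_cast; linarith [Nat.cast_nonneg (α := ℝ) n]
    linarith
  have hs : 0 < Real.sqrt ρ := Real.sqrt_pos.mpr hρ0
  have hsq : Real.sqrt ρ ^ 2 = ρ := Real.sq_sqrt hρ0.le
  have hsθ : 0 < Real.sin θ := Real.sin_pos_of_pos_of_lt_pi hθ.1 hθ.2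
  -- the fundamental trigonometric recurrence
  have htrig : ∀ x : ℝ, Real.sqrt ρ * Real.sin ((x+1)*θ)
      = (ρ * ((n:ℝ)+1+1) + 1 - ((n:ℝ)+1)) * Real.sin (x*θ)
        - Real.sqrt ρ * Real.sin ((x-1)*θ) := by
    intro x
    have h := trig_aux θ x
    rw [hcos] at h
    push_cast at h
    field_simp at h
    rw [mul_comm θ (x-1)] at h
    linear_combination h
  have hD : Real.sqrt ρ * Real.sin θ ≠ 0 := by positivity
  -- single-fraction forms of the matrix entries
  have f11 : ∀ s : ℕ, F11 s = (Real.sqrt ρ * Real.sin (((s:ℝ)+1)*θ) + (n:ℝ) * Real.sin ((s:ℝ)*θ))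
      / (Real.sqrt ρ * Real.sin θ) := by
    intro s
    simp only [hF11]
    push_cast
    field_simp
    ring
  have f12 : ∀ s : ℕ, F12 s = (-(((n:ℝ)+1) * Real.sqrt ρ^2 * Real.sin ((s:ℝ)*θ)))
      / (Real.sqrt ρ * Real.sin θ) := by
    intro s
    simp only [hF12]
    push_cast
    field_simp
  have f21 : ∀ s : ℕ, F21 s = (((n:ℝ)+1) * Real.sin ((s:ℝ)*θ)) / (Real.sqrt ρ * Real.sin θ) := by
    intro s
    simp only [hF21]
    push_cast
    ring
  have f22 : ∀ s : ℕ, F22 s = (-(Real.sqrt ρ * Real.sin (((s:ℝ)-1)*θ)) - (n:ℝ) * Real.sin ((s:ℝ)*θ))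
      / (Real.sqrt ρ * Real.sin θ) := by
    intro s
    simp only [hF22]
    push_cast
    field_simp
    ring
  -- matrix identities
  have m1 : ∀ s : ℕ, Real.sqrt ρ * F11 (s+1)
      = Real.sqrt ρ^2*((n:ℝ)+1+1)*F11 s - Real.sqrt ρ^2*((n:ℝ)+1)*F21 s := by
    intro s
    rw [f11 (s+1), f11 s, f21 s]
    push_cast
    rw [← mul_div_assoc, ← mul_div_assoc, ← mul_div_assoc, div_sub_div_same]
    congr 1
    have T1 := htrig ((s:ℝ)+1)
    rw [show ((s:ℝ)+1-1) = (s:ℝ) by ring] at T1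
    linear_combination (Real.sqrt ρ) * T1
      - (((n:ℝ)+2) * Real.sqrt ρ * Real.sin (((s:ℝ)+1)*θ)) * hsq
  have m2 : ∀ s : ℕ, Real.sqrt ρ * F12 (s+1)
      = Real.sqrt ρ^2*((n:ℝ)+1+1)*F12 s - Real.sqrt ρ^2*((n:ℝ)+1)*F22 s := by
    intro s
    rw [f12 (s+1), f12 s, f22 s]
    push_cast
    rw [← mul_div_assoc, ← mul_div_assoc, ← mul_div_assoc, div_sub_div_same]
    congr 1
    have T0 := htrig ((s:ℝ))
    linear_combination (-((n:ℝ)+1) * Real.sqrt ρ^2) * T0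
      + (((n:ℝ)+1)*((n:ℝ)+2)*Real.sqrt ρ^2*Real.sin ((s:ℝ)*θ)) * hsq
  have m3 : ∀ s : ℕ, Real.sqrt ρ * F21 (s+1)
      = ((n:ℝ)+1)*F11 s - ((n:ℝ))*F21 s := by
    intro s
    rw [f21 (s+1), f11 s, f21 s]
    push_cast
    rw [← mul_div_assoc, ← mul_div_assoc, ← mul_div_assoc, div_sub_div_same]
    congr 1
    ring
  have m4 : ∀ s : ℕ, Real.sqrt ρ * F22 (s+1)
      = ((n:ℝ)+1)*F12 s - ((n:ℝ))*F22 s := by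
    intro s
    rw [f22 (s+1), f12 s, f22 s]
    push_cast
    rw [← mul_div_assoc, ← mul_div_assoc, ← mul_div_assoc, div_sub_div_same]
    congr 1
    rw [show ((s:ℝ)+1-1) = (s:ℝ) by ring]
    have T0 := htrig ((s:ℝ))
    linear_combination (-(n:ℝ)) * T0 + ((n:ℝ)*((n:ℝ)+2)*Real.sin ((s:ℝ)*θ)) * hsq
  -- values at 0
  have hF110 : F11 0 = 1 := by simp [hF11, hsθ.ne']
  have hF120 : F12 0 = 0 := by simp [hF12]
  have hF210 : F21 0 = 0 := by simp [hF21]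
  have hF220 : F22 0 = 1 := by
    simp only [hF22, Nat.cast_zero, zero_mul, Real.sin_zero, mul_zero, zero_div, zero_sub,
      zero_mul, mul_zero]
    rw [show (-1 : ℝ) * θ = -θ by ring, Real.sin_neg]
    field_simp
    norm_num
  -- G reindexing
  have hG21' : ∀ k, G21 k = ∑ i ∈ range (n+1),
      ((n:ℝ) - i) * (b (k*(n+1)+i+1) - b (k*(n+1)+i)) := by
    intro k
    simp only [hG21]
    rw [icc_to_range]
    refine Finset.sum_congr rfl ?_
    intro i hi
    simp only [Finset.mem_range] at hi
    have e1 : k*(n+1) + (n+1+1 - (n+1-i)) = k*(n+1)+i+1 := by omega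
    have e2 : k*(n+1) + (n+1 - (n+1-i)) = k*(n+1)+i := by omega
    rw [e1, e2]
    have e3 : ((n+1-i : ℕ) : ℝ) = (n:ℝ) + 1 - i := by
      push_cast [Nat.cast_sub (by omega : i ≤ n + 1)]; ring
    rw [e3]; ring
  have hG11' : ∀ k, G11 k = ρ * ∑ i ∈ range (n+1),
      ((n:ℝ) + 1 - i) * (b (k*(n+1)+i+1) - b (k*(n+1)+i)) := by
    intro k
    simp only [hG11]
    rw [icc_to_range]
    congr 1
    refine Finset.sum_congr rfl ?_
    intro i hi
    simp only [Finset.mem_range] at hi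
    have e1 : k*(n+1) + (n+1+1 - (n+1-i)) = k*(n+1)+i+1 := by omega
    have e2 : k*(n+1) + (n+1 - (n+1-i)) = k*(n+1)+i := by omega
    rw [e1, e2]
    have e3 : ((n+1-i : ℕ) : ℝ) = (n:ℝ) + 1 - i := by
      push_cast [Nat.cast_sub (by omega : i ≤ n + 1)]; ring
    rw [e3]
  -- within-block difference lemma
  have hd : ∀ k m, m ≤ n → a (k*(n+1) + m + 1) - a (k*(n+1) + m)
      = (a (k*(n+1)+1) - a (k*(n+1)))
        + ∑ j ∈ range m, (b (k*(n+1)+j+1) - b (k*(n+1)+j)) := by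
    intro k m hm
    induction m with
    | zero => simp
    | succ m ih =>
      have hm' : m ≤ n := by omega
      have h1 : (1:ℕ) ≤ k*(n+1) + m + 1 := by omega
      have hnd : ¬ (n+1) ∣ (k*(n+1) + m + 1) := by
        intro hdvd
        have h2 : (n+1) ∣ k*(n+1) := ⟨k, by ring⟩
        have h3 : (n+1) ∣ (m+1) := by
          have h4 : k*(n+1) + (m+1) = k*(n+1) + m + 1 := by omega
          exact (Nat.dvd_add_right h2).mp (by rwa [h4])
        have := Nat.le_of_dvd (by omega) h3
        omega
      have hrec := ha (k*(n+1) + m + 1) h1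
      rw [if_neg hnd] at hrec
      have e1 : k*(n+1) + m + 1 - 1 = k*(n+1) + m := by omega
      rw [e1] at hrec
      have e2 : k*(n+1) + (m+1) + 1 = (k*(n+1) + m + 1) + 1 := by omega
      have e3 : k*(n+1) + (m+1) = k*(n+1) + m + 1 := by omega
      rw [e2, e3, hrec, Finset.sum_range_succ]
      have h5 := ih hm'
      linarith [h5]
  -- telescoped block formula
  have hT : ∀ k m, m ≤ n + 1 → a (k*(n+1) + m)
      = a (k*(n+1)) + (m:ℝ) * (a (k*(n+1)+1) - a (k*(n+1)))
        + ∑ i ∈ range m, ∑ j ∈ range i, (b (k*(n+1)+j+1) - b (k*(n+1)+j)) := by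
    intro k m hm
    have tele := Finset.sum_range_sub (fun i => a (k*(n+1)+i)) m
    have hcong : ∀ i ∈ range m, a (k*(n+1)+(i+1)) - a (k*(n+1)+i)
        = (a (k*(n+1)+1) - a (k*(n+1)))
          + ∑ j ∈ range i, (b (k*(n+1)+j+1) - b (k*(n+1)+j)) := by
      intro i hi
      simp only [Finset.mem_range] at hi
      have e : k*(n+1) + (i+1) = k*(n+1) + i + 1 := by omega
      rw [e]
      exact hd k i (by omega)
    rw [Finset.sum_congr rfl hcong, Finset.sum_add_distrib, Finset.sum_const,
      Finset.card_range, nsmul_eq_mul] at tele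
    have e0 : k*(n+1) + 0 = k*(n+1) := by omega
    rw [e0] at tele
    linarith [tele]
  -- one-block transfer equations
  have E2 : ∀ k, a ((k+1)*(n+1)) = ((n:ℝ)+1) * a (k*(n+1)+1)
      - ((n:ℝ)) * a (k*(n+1)) + G21 k := by
    intro k
    have hidx : (k+1)*(n+1) = k*(n+1) + (n+1) := by ring
    rw [hidx, hT k (n+1) le_rfl, dsum_aux, hG21' k]
    push_cast
    have hc : ∀ j ∈ range (n+1),
        ((n:ℝ) + 1 - 1 - j) * (b (k*(n+1)+j+1) - b (k*(n+1)+j))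
        = ((n:ℝ) - j) * (b (k*(n+1)+j+1) - b (k*(n+1)+j)) := by
      intro j _; ring
    rw [Finset.sum_congr rfl hc]
    ring
  have E1 : ∀ k, a ((k+1)*(n+1) + 1) = ρ*((n:ℝ)+1+1) * a (k*(n+1)+1)
      - ρ*((n:ℝ)+1) * a (k*(n+1)) + G11 k := by
    intro k
    have h1 : (1:ℕ) ≤ k*(n+1) + (n+1) := by omega
    have hdvd : (n+1) ∣ (k*(n+1) + (n+1)) := ⟨k+1, by ring⟩
    have hrec := ha (k*(n+1) + (n+1)) h1
    rw [if_pos hdvd] at hrec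
    have e1 : k*(n+1) + (n+1) - 1 = k*(n+1) + n := by omega
    rw [e1] at hrec
    have hidx : (k+1)*(n+1) + 1 = k*(n+1) + (n+1) + 1 := by ring
    rw [hidx, hrec, hT k (n+1) le_rfl, hT k n (by omega), dsum_aux, dsum_aux, hG11' k]
    have hpeel1 : ∑ j ∈ range (n+1), (((n+1:ℕ):ℝ) - 1 - j) * (b (k*(n+1)+j+1) - b (k*(n+1)+j))
        = ∑ j ∈ range n, ((n:ℝ) - j) * (b (k*(n+1)+j+1) - b (k*(n+1)+j)) := by
      rw [Finset.sum_range_succ]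
      have h0 : (((n+1:ℕ):ℝ) - 1 - (n:ℝ)) * (b (k*(n+1)+n+1) - b (k*(n+1)+n)) = 0 := by
        push_cast; ring
      rw [h0, add_zero]
      exact Finset.sum_congr rfl (fun j _ => by push_cast; ring)
    have hpeel2 : ∑ j ∈ range (n+1), ((n:ℝ) + 1 - j) * (b (k*(n+1)+j+1) - b (k*(n+1)+j))
        = ∑ j ∈ range n, ((n:ℝ) + 1 - j) * (b (k*(n+1)+j+1) - b (k*(n+1)+j))
          + (b (k*(n+1)+n+1) - b (k*(n+1)+n)) := by
      rw [Finset.sum_range_succ]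
      push_cast
      ring
    have hmerge : (2:ℝ) * ∑ j ∈ range n, ((n:ℝ) - j) * (b (k*(n+1)+j+1) - b (k*(n+1)+j))
        - ∑ j ∈ range n, ((n:ℝ) - 1 - j) * (b (k*(n+1)+j+1) - b (k*(n+1)+j))
        = ∑ j ∈ range n, ((n:ℝ) + 1 - j) * (b (k*(n+1)+j+1) - b (k*(n+1)+j)) := by
      rw [Finset.mul_sum, ← Finset.sum_sub_distrib]
      exact Finset.sum_congr rfl (fun j _ => by ring)
    have ebn : b (k*(n+1) + (n+1)) = b (k*(n+1)+n+1) := rfl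
    rw [hpeel1, hpeel2, ebn]
    push_cast
    linear_combination ρ * hmerge
  -- the main induction
  intro k
  induction k with
  | zero =>
    constructor
    · simp [hF110, hF120]
    · simp [hF210, hF220]
  | succ k ih =>
    obtain ⟨ih1, ih2⟩ := ih
    have key1 := E1 k
    have key2 := E2 k
    constructor
    · rw [key1, ih1, ih2]
      simp only [Nat.add_sub_cancel]
      push_cast
      refine step_combine k _ _ _ _ _ _ _ _ _ ?_ ?_ ?_
      · rw [pow_succ]
        linear_combination (-(Real.sqrt ρ ^ k * a 1)) * m1 k - (Real.sqrt ρ ^ k * a 0) * m2 k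
          - (((n:ℝ)+1+1) * (Real.sqrt ρ ^ k * (F11 k * a 1 + F12 k * a 0))
             - ((n:ℝ)+1) * (Real.sqrt ρ ^ k * (F21 k * a 1 + F22 k * a 0))) * hsq
      · intro s hs
        simp only [Finset.mem_range] at hs
        have e : k - s = (k - 1 - s) + 1 := by omega
        rw [e, pow_succ]
        linear_combination (-(Real.sqrt ρ ^ (k-1-s) * G11 s)) * m1 (k-1-s)
          - (Real.sqrt ρ ^ (k-1-s) * G21 s) * m2 (k-1-s)
          - (((n:ℝ)+1+1) * (Real.sqrt ρ ^ (k-1-s) * (F11 (k-1-s) * G11 s + F12 (k-1-s) * G21 s))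
             - ((n:ℝ)+1) * (Real.sqrt ρ ^ (k-1-s) * (F21 (k-1-s) * G11 s + F22 (k-1-s) * G21 s))) * hsq
      · simp [Nat.sub_self, hF110, hF120]
    · rw [key2, ih1, ih2]
      simp only [Nat.add_sub_cancel]
      push_cast
      refine step_combine k _ _ _ _ _ _ _ _ _ ?_ ?_ ?_
      · rw [pow_succ]
        linear_combination (-(Real.sqrt ρ ^ k * a 1)) * m3 k - (Real.sqrt ρ ^ k * a 0) * m4 k
      · intro s hs
        simp only [Finset.mem_range] at hs
        have e : k - s = (k - 1 - s) + 1 := by omega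
        rw [e, pow_succ]
        linear_combination (-(Real.sqrt ρ ^ (k-1-s) * G11 s)) * m3 (k-1-s)
          - (Real.sqrt ρ ^ (k-1-s) * G21 s) * m4 (k-1-s)
      · simp [Nat.sub_self, hF210, hF220]
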